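/- Let (z_t)_{t≤T} be real-valued random variables adapted to a filtration (F_t) with 0 ≤ z_t ≤ B almost surely. Then with probability at least 1 − δ, Σ_{t=1}^T E[z_t | F_{t−1}] ≤ 2 Σ_{t=1}^T z_t + 8B log(2/δ). -/

import Mathlib

open MeasureTheory Finset

private lemma aux_exp_neg_le {x : ℝ} (h0 : 0 ≤ x) (h1 : x ≤ 1) :
    Real.exp (-x) ≤ 1 - x / 2 := by
  have h := Real.add_one_le_exp x
  have hp := Real.exp_pos x
  have key : Real.exp (-x) * Real.exp x = 1 := by
    rw [← Real.exp_add]; simp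
  nlinarith [Real.exp_pos (-x)]

/-- **Freedman's inequality** (Lemma 2 of Zhu et al., 2022).
Let `(z_t)_{t ≤ T}` be real-valued random variables adapted to a filtration `(F_t)`
with `0 ≤ z_t ≤ B` almost surely. Then with probability at least `1 - δ`,
`∑_{t=1}^T E[z_t | F_{t-1}] ≤ 2 ∑_{t=1}^T z_t + 8 B log(2/δ)`. -/
theorem freedman_inequality
    {Ω : Type*} {m : MeasurableSpace Ω} (μ : Measure Ω) [IsProbabilityMeasure μ]
    (F : Filtration ℕ m) (z : ℕ → Ω → ℝ) (hadapt : Adapted F z)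
    {B : ℝ} (hB : 0 < B)
    (hbound : ∀ t, ∀ᵐ ω ∂μ, 0 ≤ z t ω ∧ z t ω ≤ B)
    (T : ℕ) {δ : ℝ} (hδ : δ ∈ Set.Ioo (0:ℝ) 1) :
    ENNReal.ofReal (1 - δ)
      ≤ μ {ω | ∑ t ∈ Finset.Icc 1 T, (μ[z t | F (t - 1)]) ω
            ≤ 2 * ∑ t ∈ Finset.Icc 1 T, z t ω + 8 * B * Real.log (2 / δ)} := by
  obtain ⟨hδ0, hδ1⟩ := hδ
  have hB2 : (0:ℝ) < 2 * B := by linarith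
  set g : ℕ → Ω → ℝ := fun t => μ[z t | F (t - 1)] with hgdef
  set W : ℕ → Ω → ℝ := fun t ω => Real.exp ((2*B)⁻¹ * g t ω - B⁻¹ * z t ω) with hWdef
  set M : ℕ → Ω → ℝ := fun n ω => ∏ t ∈ Icc 1 n, W t ω with hMdef
  -- basic measurability and integrability
  have hz_sm : ∀ t, AEStronglyMeasurable (z t) μ :=
    fun t => ((hadapt t).stronglyMeasurable.mono (F.le t)).aestronglyMeasurable
  have hz_int : ∀ t, Integrable (z t) μ := by
    intro t
    refine Integrable.mono' (integrable_const B) (hz_sm t) ?_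
    filter_upwards [hbound t] with ω h
    rw [Real.norm_eq_abs, abs_le]
    exact ⟨by linarith [h.1], h.2⟩
  have hg_sm : ∀ t, StronglyMeasurable[F (t-1)] (g t) := fun t => stronglyMeasurable_condExp
  have hg_nonneg : ∀ t, 0 ≤ᵐ[μ] g t := fun t =>
    condExp_nonneg (by filter_upwards [hbound t] with ω h using h.1)
  have hg_leB : ∀ t, ∀ᵐ ω ∂μ, g t ω ≤ B := by
    intro t
    have h1 : g t ≤ᵐ[μ] μ[(fun _ => B) | F (t-1)] :=
      condExp_mono (hz_int t) (integrable_const B)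
        (by filter_upwards [hbound t] with ω h using h.2)
    have h2 : μ[(fun _ => B) | F (t-1)] = fun _ => B := condExp_const (F.le _) B
    filter_upwards [h1] with ω h
    simpa [h2] using h
  have hW_sm : ∀ t, StronglyMeasurable[F t] (W t) := by
    intro t
    have h1 : StronglyMeasurable[F t] (g t) := (hg_sm t).mono (F.mono (Nat.sub_le t 1))
    exact Real.continuous_exp.comp_stronglyMeasurable
      ((stronglyMeasurable_const.mul h1).sub (stronglyMeasurable_const.mul (hadapt t).stronglyMeasurable))
  have hW_pos : ∀ t ω, 0 < W t ω := fun t ω => Real.exp_pos _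
  have hW_le : ∀ t, ∀ᵐ ω ∂μ, W t ω ≤ Real.exp 2⁻¹ := by
    intro t
    filter_upwards [hbound t, hg_leB t] with ω h hg
    apply Real.exp_le_exp.mpr
    have h1 : (2*B)⁻¹ * g t ω ≤ (2*B)⁻¹ * B :=
      mul_le_mul_of_nonneg_left hg (by positivity)
    have h2 : 0 ≤ B⁻¹ * z t ω := mul_nonneg (by positivity) h.1
    have h3 : (2*B)⁻¹ * B = 2⁻¹ := by field_simp
    linarith
  have hW_int : ∀ t, Integrable (W t) μ := by
    intro t
    refine Integrable.mono' (integrable_const (Real.exp 2⁻¹))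
      ((hW_sm t).mono (F.le t)).aestronglyMeasurable ?_
    filter_upwards [hW_le t] with ω h
    rw [Real.norm_eq_abs, abs_of_pos (hW_pos t ω)]
    exact h
  have hM_sm : ∀ n, StronglyMeasurable[F n] (M n) := by
    intro n
    apply Finset.stronglyMeasurable_fun_prod
    intro t ht
    exact (hW_sm t).mono (F.mono (mem_Icc.mp ht).2)
  have hM_nonneg : ∀ n ω, 0 ≤ M n ω := fun n ω =>
    Finset.prod_nonneg fun t _ => (hW_pos t ω).le
  have hM_le : ∀ n, ∀ᵐ ω ∂μ, M n ω ≤ Real.exp 2⁻¹ ^ n := by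
    intro n
    filter_upwards [ae_all_iff.mpr hW_le] with ω h
    calc M n ω ≤ ∏ _t ∈ Icc 1 n, Real.exp 2⁻¹ :=
          Finset.prod_le_prod (fun t _ => (hW_pos t ω).le) (fun t _ => h t)
      _ = Real.exp 2⁻¹ ^ n := by simp [Nat.card_Icc]
  have hM_int : ∀ n, Integrable (M n) μ := by
    intro n
    refine Integrable.mono' (integrable_const (Real.exp 2⁻¹ ^ n))
      ((hM_sm n).mono (F.le n)).aestronglyMeasurable ?_
    filter_upwards [hM_le n] with ω h
    rw [Real.norm_eq_abs, abs_of_nonneg (hM_nonneg n ω)]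
    exact h
  -- conditional supermartingale step
  have hstep : ∀ t : ℕ, μ[W t | F (t-1)] ≤ᵐ[μ] fun _ => 1 := by
    intro t
    have hm' : F (t-1) ≤ m := F.le _
    have hWeq : W t = (fun ω => Real.exp ((2*B)⁻¹ * g t ω)) *
        (fun ω => Real.exp (-(B⁻¹ * z t ω))) := by
      funext ω
      show Real.exp _ = _
      rw [Pi.mul_apply, ← Real.exp_add]
      ring_nf
    have hf_sm : StronglyMeasurable[F (t-1)] (fun ω => Real.exp ((2*B)⁻¹ * g t ω)) :=
      Real.continuous_exp.comp_stronglyMeasurable (stronglyMeasurable_const.mul (hg_sm t))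
    have hexp_sm : AEStronglyMeasurable (fun ω => Real.exp (-(B⁻¹ * z t ω))) μ :=
      (Real.continuous_exp.comp_stronglyMeasurable
        ((stronglyMeasurable_const.mul ((hadapt t).stronglyMeasurable.mono (F.le t))).neg)).aestronglyMeasurable
    have hexp_int : Integrable (fun ω => Real.exp (-(B⁻¹ * z t ω))) μ := by
      refine Integrable.mono' (integrable_const 1) hexp_sm ?_
      filter_upwards [hbound t] with ω h
      rw [Real.norm_eq_abs, abs_of_pos (Real.exp_pos _)]
      rw [show (1:ℝ) = Real.exp 0 by simp]
      apply Real.exp_le_exp.mpr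
      have : 0 ≤ B⁻¹ * z t ω := mul_nonneg (by positivity) h.1
      linarith
    have hprod_int : Integrable ((fun ω => Real.exp ((2*B)⁻¹ * g t ω)) *
        (fun ω => Real.exp (-(B⁻¹ * z t ω)))) μ := by
      rw [← hWeq]; exact hW_int t
    have h1 := condExp_mul_of_stronglyMeasurable_left hf_sm hprod_int hexp_int
    have haff_int : Integrable (fun ω => 1 - (2*B)⁻¹ * z t ω) μ := by
      have := (integrable_const (1:ℝ)).sub ((hz_int t).const_mul ((2*B)⁻¹))
      exact this
    have h2 : μ[(fun ω => Real.exp (-(B⁻¹ * z t ω))) | F (t-1)] ≤ᵐ[μ]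
        μ[(fun ω => 1 - (2*B)⁻¹ * z t ω) | F (t-1)] := by
      refine condExp_mono hexp_int haff_int ?_
      filter_upwards [hbound t] with ω h
      have hx0 : 0 ≤ z t ω / B := div_nonneg h.1 hB.le
      have hx1 : z t ω / B ≤ 1 := (div_le_one hB).mpr h.2
      have key := aux_exp_neg_le hx0 hx1
      have e1 : B⁻¹ * z t ω = z t ω / B := by rw [inv_mul_eq_div]
      have e2 : (2*B)⁻¹ * z t ω = z t ω / B / 2 := by
        rw [inv_mul_eq_div, div_div, mul_comm]
      rw [e1, e2]
      exact key
    have h3 : μ[(fun ω => 1 - (2*B)⁻¹ * z t ω) | F (t-1)] =ᵐ[μ]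
        fun ω => 1 - (2*B)⁻¹ * g t ω := by
      have heq : (fun ω => 1 - (2*B)⁻¹ * z t ω) =
          (fun _ => (1:ℝ)) - ((2*B)⁻¹ : ℝ) • (z t) := by
        funext ω; simp [smul_eq_mul]
      rw [heq]
      have hsub := condExp_sub (m := F (t-1)) (μ := μ) (integrable_const (1:ℝ))
        ((hz_int t).smul ((2*B)⁻¹ : ℝ))
      refine hsub.trans ?_
      have hc := condExp_smul (m := F (t-1)) (μ := μ) ((2*B)⁻¹ : ℝ) (z t)
      have hone : μ[(fun _ => (1:ℝ)) | F (t-1)] = fun _ => (1:ℝ) := condExp_const hm' 1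
      filter_upwards [hc] with ω hω
      simp only [Pi.sub_apply, hone, Pi.smul_apply, smul_eq_mul] at hω ⊢
      rw [hω]
    have h4 : (fun ω => Real.exp ((2*B)⁻¹ * g t ω)) *
        μ[(fun ω => Real.exp (-(B⁻¹ * z t ω))) | F (t-1)] ≤ᵐ[μ] fun _ => 1 := by
      filter_upwards [h2, h3] with ω hω2 hω3
      have hle := hω2.trans_eq hω3
      simp only [Pi.mul_apply]
      have hfpos : 0 < Real.exp ((2*B)⁻¹ * g t ω) := Real.exp_pos _
      have hlin : 1 - (2*B)⁻¹ * g t ω ≤ Real.exp (-((2*B)⁻¹ * g t ω)) := by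
        linarith [Real.add_one_le_exp (-((2*B)⁻¹ * g t ω))]
      have hcancel : Real.exp ((2*B)⁻¹ * g t ω) * Real.exp (-((2*B)⁻¹ * g t ω)) = 1 := by
        rw [← Real.exp_add]; simp
      show Real.exp ((2*B)⁻¹ * g t ω) * _ ≤ (1:ℝ)
      nlinarith [mul_le_mul_of_nonneg_left hle hfpos.le,
        mul_le_mul_of_nonneg_left hlin hfpos.le]
    rw [hWeq]
    exact h1.le.trans h4
  -- inductive bound on the expectation
  have hEM : ∀ n, ∫ ω, M n ω ∂μ ≤ 1 := by
    intro n
    induction n with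
    | zero =>
      have h0 : ∀ ω, M 0 ω = 1 := by
        intro ω
        show ∏ t ∈ Icc 1 0, W t ω = 1
        rw [show Icc 1 0 = (∅ : Finset ℕ) by simp]
        simp
      simp [h0]
    | succ n ih =>
      have hMeq : M (n+1) = M n * W (n+1) := by
        funext ω
        show ∏ t ∈ Icc 1 (n+1), W t ω = (∏ t ∈ Icc 1 n, W t ω) * W (n+1) ω
        exact Finset.prod_Icc_succ_top (Nat.succ_le_succ (Nat.zero_le n)) _
      have hint : Integrable (M n * W (n+1)) μ := by rw [← hMeq]; exact hM_int (n+1)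
      have h1 : μ[M n * W (n+1) | F n] =ᵐ[μ] M n * μ[W (n+1) | F n] :=
        condExp_mul_of_stronglyMeasurable_left (hM_sm n) hint (hW_int (n+1))
      have h2 : μ[W (n+1) | F n] ≤ᵐ[μ] fun _ => 1 := by
        have := hstep (n+1)
        simpa using this
      calc ∫ ω, M (n+1) ω ∂μ = ∫ ω, (M n * W (n+1)) ω ∂μ := by rw [hMeq]
        _ = ∫ ω, (μ[M n * W (n+1) | F n]) ω ∂μ := (integral_condExp (F.le n)).symm
        _ ≤ ∫ ω, M n ω ∂μ := by
            refine integral_mono_ae integrable_condExp (hM_int n) ?_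
            filter_upwards [h1, h2] with ω hω1 hω2
            rw [hω1]
            calc M n ω * (μ[W (n+1) | F n]) ω ≤ M n ω * 1 :=
                  mul_le_mul_of_nonneg_left (by simpa using hω2) (hM_nonneg n ω)
              _ = M n ω := mul_one _
        _ ≤ 1 := ih
  -- Markov's inequality
  have hmeas_MT : Measurable (M T) := ((hM_sm T).mono (F.le T)).measurable
  have hA_meas : MeasurableSet {ω | δ⁻¹ ≤ M T ω} :=
    measurableSet_le measurable_const hmeas_MT
  have hMar := mul_meas_ge_le_integral_of_nonneg
    (ae_of_all μ fun ω => hM_nonneg T ω) (hM_int T) δ⁻¹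
  have htoReal : (μ {ω | δ⁻¹ ≤ M T ω}).toReal ≤ δ := by
    have h1 : δ⁻¹ * (μ {ω | δ⁻¹ ≤ M T ω}).toReal ≤ 1 := le_trans hMar (hEM T)
    have h2 := mul_le_mul_of_nonneg_left h1 hδ0.le
    rwa [← mul_assoc, mul_inv_cancel₀ hδ0.ne', one_mul, mul_one] at h2
  have hμA : μ {ω | δ⁻¹ ≤ M T ω} ≤ ENNReal.ofReal δ := by
    have hne : μ {ω | δ⁻¹ ≤ M T ω} ≠ ⊤ := measure_ne_top μ _
    rw [← ENNReal.ofReal_toReal hne]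
    exact ENNReal.ofReal_le_ofReal htoReal
  have hcompl : ENNReal.ofReal (1 - δ) ≤ μ ({ω | δ⁻¹ ≤ M T ω}ᶜ) := by
    rw [measure_compl hA_meas (measure_ne_top μ _), measure_univ]
    have : ENNReal.ofReal (1 - δ) = 1 - ENNReal.ofReal δ := by
      rw [← ENNReal.ofReal_one, ← ENNReal.ofReal_sub _ hδ0.le]
    rw [this]
    exact tsub_le_tsub_left hμA 1
  refine le_trans hcompl (measure_mono ?_)
  intro ω hω
  simp only [Set.mem_compl_iff, Set.mem_setOf_eq, not_le] at hω
  simp only [Set.mem_setOf_eq]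
  have hexp : M T ω = Real.exp (∑ t ∈ Icc 1 T, ((2*B)⁻¹ * g t ω - B⁻¹ * z t ω)) :=
    (Real.exp_sum _ _).symm
  have hlog : ∑ t ∈ Icc 1 T, ((2*B)⁻¹ * g t ω - B⁻¹ * z t ω) < Real.log δ⁻¹ := by
    have hlt : Real.exp (∑ t ∈ Icc 1 T, ((2*B)⁻¹ * g t ω - B⁻¹ * z t ω)) < δ⁻¹ := by
      rw [← hexp]; exact hω
    have := Real.log_lt_log (Real.exp_pos _) hlt
    rwa [Real.log_exp] at this
  have hsum : ∑ t ∈ Icc 1 T, ((2*B)⁻¹ * g t ω - B⁻¹ * z t ω) =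
      (2*B)⁻¹ * ∑ t ∈ Icc 1 T, g t ω - B⁻¹ * ∑ t ∈ Icc 1 T, z t ω := by
    rw [Finset.sum_sub_distrib, Finset.mul_sum, Finset.mul_sum]
  have hL : Real.log δ⁻¹ ≤ Real.log (2 / δ) := by
    apply Real.log_le_log (by positivity)
    rw [inv_eq_one_div]
    gcongr
    norm_num
  have hL2pos : 0 ≤ Real.log (2 / δ) := by
    apply Real.log_nonneg
    rw [le_div_iff₀ hδ0]
    linarith
  have hmain : (2*B)⁻¹ * ∑ t ∈ Icc 1 T, g t ω - B⁻¹ * ∑ t ∈ Icc 1 T, z t ω ≤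
      Real.log (2 / δ) := by
    rw [← hsum]
    exact le_trans hlog.le hL
  show ∑ t ∈ Icc 1 T, g t ω ≤ 2 * ∑ t ∈ Icc 1 T, z t ω + 8 * B * Real.log (2 / δ)
  have e1 : (2*B) * ((2*B)⁻¹ * ∑ t ∈ Icc 1 T, g t ω - B⁻¹ * ∑ t ∈ Icc 1 T, z t ω) =
      ∑ t ∈ Icc 1 T, g t ω - 2 * ∑ t ∈ Icc 1 T, z t ω := by
    field_simp
  have e2 : (2*B) * ((2*B)⁻¹ * ∑ t ∈ Icc 1 T, g t ω - B⁻¹ * ∑ t ∈ Icc 1 T, z t ω) ≤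
      (2*B) * Real.log (2 / δ) := mul_le_mul_of_nonneg_left hmain hB2.le
  rw [e1] at e2
  nlinarith [mul_nonneg hB.le hL2pos]
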